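/- Second-order splitting: for n×n complex matrices A, B and real parameter α, exp(−iα(A+B)) = exp(−i(α/2)A) · exp(−iαB) · exp(−i(α/2)A) + O(α³); precisely, the difference of the two sides, as a function of α, vanishes to second order at α = 0 (the value and first two derivatives at α = 0 agree). -/

import Mathlib

open scoped Matrix
open NormedSpace

attribute [local instance] Matrix.frobeniusNormedAddCommGroup Matrix.frobeniusNormedSpace
attribute [local instance] Matrix.frobeniusNormedRing Matrix.frobeniusNormedAlgebra

private lemma expDeriv {n : ℕ} (X : Matrix (Fin n) (Fin n) ℂ) (t : ℝ) :
    HasDerivAt (fun α : ℝ => exp (α • X)) (exp (t • X) * X) t := by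
  have h := hasDerivAt_exp_smul_const (𝕂 := ℝ) X t
  exact h

private lemma smul_rw {n : ℕ} (c : ℂ) (r : ℝ) (X : Matrix (Fin n) (Fin n) ℂ) :
    (c * r) • X = r • (c • X) := by
  rw [← smul_assoc]
  congr 1
  simp [Complex.real_smul, mul_comm]

/-- Second-order symmetric (Strang) splitting: the difference
`exp(−iα(A+B)) − exp(−i(α/2)A) exp(−iαB) exp(−i(α/2)A)`, as a function of the real
parameter α, vanishes to second order at α = 0: its value and first two derivatives
at α = 0 all vanish. -/
theorem strang_splitting_second_order {n : ℕ} (A B : Matrix (Fin n) (Fin n) ℂ) :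
    let F : ℝ → Matrix (Fin n) (Fin n) ℂ := fun α =>
      exp ((-Complex.I * α) • (A + B)) -
        exp ((-Complex.I * (α / 2)) • A) * exp ((-Complex.I * α) • B) *
          exp ((-Complex.I * (α / 2)) • A)
    F 0 = 0 ∧ deriv F 0 = 0 ∧ deriv (deriv F) 0 = 0 := by
  intro F
  set P : Matrix (Fin n) (Fin n) ℂ := (-Complex.I / 2) • A with hPdef
  set Q : Matrix (Fin n) (Fin n) ℂ := (-Complex.I) • B with hQdef
  set C : Matrix (Fin n) (Fin n) ℂ := (-Complex.I) • (A + B) with hCdef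
  have hFeq : F = fun α : ℝ =>
      exp (α • C) - exp (α • P) * exp (α • Q) * exp (α • P) := by
    funext α
    show exp ((-Complex.I * α) • (A + B)) -
        exp ((-Complex.I * (α / 2)) • A) * exp ((-Complex.I * α) • B) *
          exp ((-Complex.I * (α / 2)) • A) = _
    have h1 : (-Complex.I * (α : ℂ)) • (A + B) = α • C := by
      rw [hCdef, ← smul_rw]
    have h2 : (-Complex.I * ((α : ℂ) / 2)) • A = α • P := by
      rw [hPdef, ← smul_rw]
      congr 1
      ring
    have h3 : (-Complex.I * (α : ℂ)) • B = α • Q := by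
      rw [hQdef, ← smul_rw]
    rw [h1, h2, h3]
  have hC := expDeriv C
  have hP := expDeriv P
  have hQ := expDeriv Q
  have hF : ∀ t : ℝ, HasDerivAt F
      (exp (t • C) * C -
        ((exp (t • P) * P * exp (t • Q) + exp (t • P) * (exp (t • Q) * Q)) *
            exp (t • P) +
          exp (t • P) * exp (t • Q) * (exp (t • P) * P))) t := by
    intro t
    rw [hFeq]
    exact (hC t).sub (((hP t).mul (hQ t)).mul (hP t))
  have hderivF : deriv F = fun t : ℝ =>
      exp (t • C) * C -
        ((exp (t • P) * P * exp (t • Q) + exp (t • P) * (exp (t • Q) * Q)) *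
            exp (t • P) +
          exp (t • P) * exp (t • Q) * (exp (t • P) * P)) :=
    funext fun t => (hF t).deriv
  have hCeq : C = P + Q + P := by
    rw [hCdef, hPdef, hQdef]
    rw [smul_add]
    module
  refine ⟨?_, ?_, ?_⟩
  · rw [hFeq]
    simp
  · rw [hderivF]
    simp only [zero_smul, exp_zero, one_mul, mul_one]
    rw [hCeq]
    abel
  · rw [hderivF]
    have hD0 : HasDerivAt (fun t : ℝ =>
        exp (t • C) * C -
          ((exp (t • P) * P * exp (t • Q) + exp (t • P) * (exp (t • Q) * Q)) *
              exp (t • P) +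
            exp (t • P) * exp (t • Q) * (exp (t • P) * P)))
        (exp ((0:ℝ) • C) * C * C -
          (((exp ((0:ℝ) • P) * P * P * exp ((0:ℝ) • Q) +
                exp ((0:ℝ) • P) * P * (exp ((0:ℝ) • Q) * Q) +
              (exp ((0:ℝ) • P) * P * (exp ((0:ℝ) • Q) * Q) +
                exp ((0:ℝ) • P) * (exp ((0:ℝ) • Q) * Q * Q))) * exp ((0:ℝ) • P) +
              (exp ((0:ℝ) • P) * P * exp ((0:ℝ) • Q) +
                exp ((0:ℝ) • P) * (exp ((0:ℝ) • Q) * Q)) * (exp ((0:ℝ) • P) * P)) +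
            ((exp ((0:ℝ) • P) * P * exp ((0:ℝ) • Q) +
                exp ((0:ℝ) • P) * (exp ((0:ℝ) • Q) * Q)) * (exp ((0:ℝ) • P) * P) +
              exp ((0:ℝ) • P) * exp ((0:ℝ) • Q) *
                (exp ((0:ℝ) • P) * P * P)))) 0 := by
      refine HasDerivAt.sub ((hC 0).mul_const C) ?_
      refine HasDerivAt.add ?_ ?_
      · exact (((((hP 0).mul_const P).mul (hQ 0)).add
          ((hP 0).mul ((hQ 0).mul_const Q))).mul (hP 0))
      · exact (((hP 0).mul (hQ 0)).mul ((hP 0).mul_const P))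
    erw [hD0.deriv]
    simp only [zero_smul, exp_zero, one_mul, mul_one]
    rw [hCeq]
    noncomm_ring
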